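/- Define u(j,i,j',i',j'',i'') as in the balanced terminating basic hypergeometric sum. Then u is invariant under the transformation (j,i,j',i',j'',i'') \mapsto (i',j'',i'',j,i,j') (a Heine transformation of {}_2\phi_1). -/

import Mathlib

open Finset


open scoped BigOperators

/-- The indeterminate `t`, as a rational function over `ℚ`. -/
noncomputable def t : RatFunc ℚ := RatFunc.X

/-- `α m = ∏_{s=1}^m (1 - t^s)`. -/
noncomputable def al (m : ℕ) : RatFunc ℚ := ∏ s ∈ Finset.range m, (1 - t ^ (s + 1))

/-- The q-Pochhammer symbol `(x;t)_n = ∏_{r=0}^{n-1} (1 - x t^r)`. -/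
noncomputable def poch (x : RatFunc ℚ) (n : ℕ) : RatFunc ℚ :=
  ∏ r ∈ Finset.range n, (1 - x * t ^ r)

/-- The normalized fugacity
`u(j,i,j',i',j'',i'') = (α_{i+j}/(α_i α_{i'} α_{i''} α_j α_{j''})) ·
  ∑_{n=0}^{min(i,i')} (t^{-i};t)_n (t^{-i'};t)_n / ((t;t)_n (t^{-(i+j)};t)_n) · t^{n(i''+1)}`. -/
noncomputable def u (j i j' i' j'' i'' : ℕ) : RatFunc ℚ :=
  al (i + j) / (al i * al i' * al i'' * al j * al j'') *
    ∑ n ∈ Finset.range (min i i' + 1),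
      poch (t ^ (-(i : ℤ))) n * poch (t ^ (-(i' : ℤ))) n /
          (poch t n * poch (t ^ (-((i : ℤ) + (j : ℤ)))) n) *
        t ^ (n * (i'' + 1))

noncomputable def PP (a n : ℕ) : RatFunc ℚ := poch (t ^ (-(a : ℤ))) n

lemma t_ne : t ≠ 0 := RatFunc.X_ne_zero

lemma t_pow_ne_one {n : ℕ} (hn : n ≠ 0) : (t : RatFunc ℚ) ^ n ≠ 1 := by
  intro h
  have hX : (Polynomial.X : Polynomial ℚ) ^ n = 1 := by
    apply IsFractionRing.injective (Polynomial ℚ) (RatFunc ℚ)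
    simpa [t, ← RatFunc.algebraMap_X, map_pow] using h
  have := congrArg Polynomial.natDegree hX
  simp [Polynomial.natDegree_X_pow] at this
  exact hn this

lemma tz_ne_one {z : ℤ} (hz : z ≠ 0) : (t : RatFunc ℚ) ^ z ≠ 1 := by
  rcases lt_trichotomy z 0 with h | h | h
  · intro he
    have h2 : (t : RatFunc ℚ) ^ (-z) = 1 := by
      rw [← inv_inj, ← zpow_neg, neg_neg, he, inv_one]
    rw [show -z = ((-z).toNat : ℤ) by omega, zpow_natCast] at h2
    exact t_pow_ne_one (by omega) h2
  · omega
  · intro he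
    rw [show z = (z.toNat : ℤ) by omega, zpow_natCast] at he
    exact t_pow_ne_one (by omega) he

lemma one_sub_tz_ne {z : ℤ} (hz : z ≠ 0) : (1 : RatFunc ℚ) - t ^ z ≠ 0 := by
  intro h
  exact tz_ne_one hz (by linear_combination -h)

lemma one_sub_t_pow_ne {n : ℕ} (hn : n ≠ 0) : (1 : RatFunc ℚ) - t ^ n ≠ 0 := by
  intro h
  exact t_pow_ne_one hn (by linear_combination -h)

lemma al_ne (m : ℕ) : al m ≠ 0 := by
  unfold al
  apply prod_ne_zero_iff.2
  intro s _
  exact one_sub_t_pow_ne (by omega)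

lemma al_succ (m : ℕ) : al (m + 1) = al m * (1 - t ^ (m + 1)) := prod_range_succ _ _

lemma poch_succ (x : RatFunc ℚ) (n : ℕ) :
    poch x (n + 1) = poch x n * (1 - x * t ^ n) := prod_range_succ _ _

lemma poch_add (x : RatFunc ℚ) (m p : ℕ) :
    poch x (m + p) = poch x m * poch (x * t ^ m) p := by
  unfold poch
  rw [prod_range_add]
  congr 1
  apply prod_congr rfl
  intro r _
  rw [mul_assoc, ← pow_add]

lemma poch_t_eq_al (n : ℕ) : poch t n = al n := by
  unfold poch al
  apply prod_congr rfl
  intro r _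
  rw [← pow_succ']

lemma al_add_poch (k a : ℕ) : al (k + a) = al k * poch (t ^ ((k : ℤ) + 1)) a := by
  unfold al poch
  rw [prod_range_add]
  congr 1
  apply prod_congr rfl
  intro r _
  congr 1
  rw [show ((k:ℤ)+1) = ((k+1 : ℕ) : ℤ) by push_cast; ring, zpow_natCast, ← pow_add]
  congr 1
  omega

lemma PP_zero_of_lt {a n : ℕ} (h : a < n) : PP a n = 0 := by
  unfold PP poch
  apply prod_eq_zero (mem_range.2 h)
  rw [← zpow_natCast t a, ← zpow_add₀ t_ne]
  simp

lemma PP_ne {N m : ℕ} (h : m ≤ N) : PP N m ≠ 0 := by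
  unfold PP poch
  apply prod_ne_zero_iff.2
  intro r hr
  rw [← zpow_natCast t r, ← zpow_add₀ t_ne]
  apply one_sub_tz_ne
  have := mem_range.1 hr
  omega

lemma tzmul (a b : ℤ) : (t : RatFunc ℚ) ^ (a + b) = t ^ a * t ^ b := zpow_add₀ t_ne a b

lemma PP_eq' {n m : ℕ} (h : m ≤ n) :
    PP n m * al (n - m) = (-1) ^ m * t ^ ((m.choose 2 : ℤ) - n * m) * al n := by
  induction m with
  | zero => simp [PP, poch]
  | succ m ih =>
    have hm : m ≤ n := by omega
    have e1 : PP n (m+1) = PP n m * (1 - t ^ (-(n:ℤ)) * t ^ m) := prod_range_succ _ _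
    have e2 : al (n - m) = al (n - (m+1)) * (1 - t ^ ((n:ℤ) - m)) := by
      rw [show n - m = (n - (m+1)) + 1 by omega, al_succ]
      congr 2
      rw [show ((n:ℤ) - m) = ((n - (m+1) + 1 : ℕ) : ℤ) by push_cast [Nat.cast_sub h]; ring,
        zpow_natCast]
    have hne : (1 : RatFunc ℚ) - t ^ ((n:ℤ) - m) ≠ 0 := one_sub_tz_ne (by omega)
    have hch : (((m+1).choose 2 : ℕ) : ℤ) = (m.choose 2 : ℤ) + m := by
      rw [Nat.choose_succ_succ]
      push_cast [Nat.choose_one_right]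
      ring
    have hA : (t : RatFunc ℚ) ^ (-(n:ℤ)) * t ^ (m:ℕ) = t ^ ((m:ℤ) - n) := by
      rw [← zpow_natCast t m, ← tzmul]
      congr 1
      ring
    have h0 : (t : RatFunc ℚ) ^ ((m:ℤ) - n) * t ^ ((n:ℤ) - m) = 1 := by
      rw [← tzmul]
      simp
    have S : (-1 : RatFunc ℚ) ^ m * t ^ ((m.choose 2 : ℤ) - n * m) * al n *
          (1 - t ^ (-(n:ℤ)) * t ^ (m:ℕ))
        = (-1) ^ (m+1) * t ^ (((m+1).choose 2 : ℤ) - n * (m+1)) * al n *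
          (1 - t ^ ((n:ℤ) - m)) := by
      rw [show (((m+1).choose 2 : ℕ) : ℤ) - n * (m+1)
            = ((m.choose 2 : ℤ) - n * m) + ((m:ℤ) - n) by rw [hch]; push_cast; ring,
        tzmul, hA, pow_succ]
      linear_combination (-((-1 : RatFunc ℚ)^m * t ^ ((m.choose 2 : ℤ) - n * m) * al n)) * h0
    have key : PP n (m+1) * al (n - (m+1)) * (1 - t ^ ((n:ℤ) - m))
        = ((-1) ^ (m+1) * t ^ (((m+1).choose 2 : ℤ) - n * (m+1)) * al n) *
          (1 - t ^ ((n:ℤ) - m)) := by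
      calc PP n (m+1) * al (n - (m+1)) * (1 - t ^ ((n:ℤ) - m))
          = (PP n m * al (n - m)) * (1 - t ^ (-(n:ℤ)) * t ^ (m:ℕ)) := by rw [e1, e2]; ring
        _ = (-1) ^ m * t ^ ((m.choose 2 : ℤ) - n * m) * al n *
              (1 - t ^ (-(n:ℤ)) * t ^ (m:ℕ)) := by rw [ih hm]
        _ = _ := by rw [S]
    exact mul_right_cancel₀ hne key

lemma PP_eq {n m : ℕ} (h : m ≤ n) :
    PP n m = (-1) ^ m * t ^ ((m.choose 2 : ℤ) - n * m) * al n / al (n - m) := by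
  rw [eq_div_iff (al_ne _)]
  exact PP_eq' h
noncomputable def qb (M k : ℕ) : RatFunc ℚ :=
  if k ≤ M then al M / (al k * al (M - k)) else 0

lemma qb_eq {M k : ℕ} (h : k ≤ M) : qb M k = al M / (al k * al (M - k)) := if_pos h

lemma qb_of_gt {M k : ℕ} (h : M < k) : qb M k = 0 := if_neg (by omega)

lemma qb_zero (M : ℕ) : qb M 0 = 1 := by
  rw [qb_eq (Nat.zero_le M)]
  simp only [Nat.sub_zero, al, range_zero, prod_empty, one_mul]
  exact div_self (al_ne M)

lemma qb_self (M : ℕ) : qb M M = 1 := by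
  rw [qb_eq le_rfl]
  simp only [Nat.sub_self, al, range_zero, prod_empty, mul_one]
  exact div_self (al_ne M)

lemma qb_symm {M k : ℕ} (h : k ≤ M) : qb M k = qb M (M - k) := by
  rw [qb_eq h, qb_eq (Nat.sub_le M k), show M - (M - k) = k by omega, mul_comm]

lemma qb_pascal1 {M c : ℕ} (hc : 1 ≤ c) :
    qb (M + 1) c = qb M (c - 1) + t ^ c * qb M c := by
  rcases le_or_gt c M with h | h
  · obtain ⟨c', rfl⟩ : ∃ c', c = c' + 1 := ⟨c - 1, by omega⟩
    rw [Nat.add_sub_cancel, qb_eq (by omega : c' + 1 ≤ M + 1), qb_eq (by omega : c' ≤ M),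
      qb_eq h, show M + 1 - (c' + 1) = M - c' by omega,
      show M - c' = (M - (c'+1)) + 1 by omega]
    rw [al_succ M, show al (c' + 1) = al c' * (1 - t ^ (c' + 1)) from al_succ _,
      show al ((M - (c'+1)) + 1) = al (M - (c'+1)) * (1 - t ^ ((M - (c'+1)) + 1)) from al_succ _]
    rw [show (M - (c'+1)) + 1 = M - c' by omega,
      show (t : RatFunc ℚ) ^ (M + 1) = t ^ (c' + 1) * t ^ (M - c') by
        rw [← pow_add]; congr 1; omega]
    have h1 := al_ne M
    have h2 := al_ne c'
    have h3 := al_ne (M - (c'+1))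
    have h4 : (1 : RatFunc ℚ) - t ^ (c' + 1) ≠ 0 := one_sub_t_pow_ne (by omega)
    have h5 : (1 : RatFunc ℚ) - t ^ (M - c') ≠ 0 := one_sub_t_pow_ne (by omega)
    field_simp
    ring
  · rcases Nat.lt_or_ge M (c - 1) with h' | h'
    · rw [qb_of_gt (by omega), qb_of_gt h', qb_of_gt (by omega)]
      ring
    · have : c = M + 1 := by omega
      subst this
      rw [qb_self, Nat.add_sub_cancel, qb_self, qb_of_gt (by omega)]
      ring

lemma qb_pascal2 {n m : ℕ} (hn : 1 ≤ n) (hm : 1 ≤ m) :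
    qb n m = qb (n - 1) m + t ^ (n - m) * qb (n - 1) (m - 1) := by
  rcases Nat.lt_or_ge n m with h | h
  · rw [qb_of_gt h, qb_of_gt (by omega), qb_of_gt (by omega)]
    ring
  · rcases Nat.eq_or_lt_of_le h with h' | h'
    · subst h'
      rw [qb_self, qb_of_gt (by omega), show m - m = 0 by omega, pow_zero,
        show m - 1 = m - 1 by rfl, qb_self]
      ring
    · -- m < n, so m ≤ n - 1
      obtain ⟨M, rfl⟩ : ∃ M, n = M + 1 := ⟨n - 1, by omega⟩
      have hmM : m ≤ M := by omega
      have h9 : (M - m) + 1 ≤ M := by omega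
      rw [qb_symm (by omega : m ≤ M + 1), show M + 1 - m = (M - m) + 1 by omega,
        qb_pascal1 (by omega), Nat.add_sub_cancel, Nat.add_sub_cancel,
        ← qb_symm hmM, qb_symm h9, show M - ((M - m) + 1) = m - 1 by omega,
        show (M - m) + 1 = M + 1 - m by omega]
lemma gauss (x : RatFunc ℚ) : ∀ r, poch x r
    = ∑ p ∈ range (r + 1), (-1) ^ p * t ^ (p.choose 2) * qb r p * x ^ p := by
  intro r
  induction r with
  | zero => simp [poch, qb_zero]
  | succ r ih =>
    have hrhs : ∑ p ∈ range (r + 1 + 1), (-1) ^ p * t ^ (p.choose 2) * qb (r+1) p * x ^ p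
        = (∑ p ∈ range (r + 1), (-1) ^ (p+1) * t ^ ((p+1).choose 2) * qb (r+1) (p+1) * x ^ (p+1))
          + 1 := by
      rw [Finset.sum_range_succ' (fun p => (-1 : RatFunc ℚ) ^ p * t ^ (p.choose 2) * qb (r+1) p * x ^ p) (r+1)]
      simp [qb_zero]
    have hsplit : ∀ p ∈ range (r + 1),
        (-1 : RatFunc ℚ) ^ (p+1) * t ^ ((p+1).choose 2) * qb (r+1) (p+1) * x ^ (p+1)
        = (-1) ^ (p+1) * t ^ ((p+1).choose 2) * qb r (p+1) * x ^ (p+1)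
          + (-(x * t ^ r)) * ((-1) ^ p * t ^ (p.choose 2) * qb r p * x ^ p) := by
      intro p hp
      have hpr : p ≤ r := by have := mem_range.1 hp; omega
      rw [qb_pascal2 (by omega : 1 ≤ r + 1) (by omega : 1 ≤ p + 1), Nat.add_sub_cancel,
        Nat.add_sub_cancel, show r + 1 - (p + 1) = r - p by omega]
      have hch : (p+1).choose 2 = p.choose 2 + p := by
        have h1 : (p+1).choose 2 = p.choose 1 + p.choose 2 := Nat.choose_succ_succ p 1
        rw [Nat.choose_one_right] at h1
        omega
      have hpow : (t : RatFunc ℚ) ^ ((p+1).choose 2) * t ^ (r - p)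
          = t ^ (p.choose 2) * t ^ r := by
        rw [← pow_add, ← pow_add, hch]
        congr 1
        omega
      calc (-1 : RatFunc ℚ) ^ (p+1) * t ^ ((p+1).choose 2) * (qb r (p+1) + t ^ (r-p) * qb r p) * x ^ (p+1)
          = (-1) ^ (p+1) * t ^ ((p+1).choose 2) * qb r (p+1) * x ^ (p+1)
            + (-1) ^ (p+1) * (t ^ ((p+1).choose 2) * t ^ (r-p)) * qb r p * x ^ (p+1) := by
            ring
        _ = _ := by rw [hpow, pow_succ, pow_succ]; ring
    have e1 : ∑ p ∈ range (r + 1),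
        ((-1 : RatFunc ℚ)) ^ (p+1) * t ^ ((p+1).choose 2) * qb (r+1) (p+1) * x ^ (p+1)
        = (∑ p ∈ range (r + 1), (-1) ^ (p+1) * t ^ ((p+1).choose 2) * qb r (p+1) * x ^ (p+1))
          + (-(x * t ^ r)) * ∑ p ∈ range (r + 1), (-1) ^ p * t ^ (p.choose 2) * qb r p * x ^ p := by
      calc ∑ p ∈ range (r + 1),
            ((-1 : RatFunc ℚ)) ^ (p+1) * t ^ ((p+1).choose 2) * qb (r+1) (p+1) * x ^ (p+1)
          = ∑ p ∈ range (r + 1),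
            ((-1 : RatFunc ℚ) ^ (p+1) * t ^ ((p+1).choose 2) * qb r (p+1) * x ^ (p+1)
              + (-(x * t ^ r)) * ((-1) ^ p * t ^ (p.choose 2) * qb r p * x ^ p)) :=
            Finset.sum_congr rfl hsplit
        _ = _ := by
            rw [Finset.sum_add_distrib, ← Finset.mul_sum]
    have e2 : (∑ p ∈ range (r + 1),
        ((-1 : RatFunc ℚ)) ^ (p+1) * t ^ ((p+1).choose 2) * qb r (p+1) * x ^ (p+1)) + 1
        = poch x r := by
      have h3 := Finset.sum_range_succ' (fun p => (-1 : RatFunc ℚ) ^ p * t ^ (p.choose 2) * qb r p * x ^ p) (r+1)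
      rw [Finset.sum_range_succ _ (r+1)] at h3
      rw [qb_of_gt (by omega : r < r + 1), mul_zero, zero_mul, add_zero] at h3
      rw [ih]
      simpa [qb_zero] using h3.symm
    have final : ∑ p ∈ range (r + 1 + 1), (-1 : RatFunc ℚ) ^ p * t ^ (p.choose 2) * qb (r+1) p * x ^ p
        = poch x r * (1 - x * t ^ r) := by
      rw [hrhs, e1, ← ih]
      linear_combination e2
    rw [poch_succ]
    exact final.symm

lemma gauss' {r R : ℕ} (h : r ≤ R) (f : ℤ) :
    ∑ p ∈ range (R + 1), PP r p / al p * t ^ (f * p) = poch (t ^ (f - r)) r := by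
  have hsub : range (r + 1) ⊆ range (R + 1) := by
    apply Finset.range_subset_range.2; omega
  rw [← Finset.sum_subset hsub (by
    intro p _ hp
    rw [PP_zero_of_lt (by simp at hp ⊢; omega), zero_div, zero_mul])]
  rw [gauss (t ^ (f - r)) r]
  apply Finset.sum_congr rfl
  intro p hp
  have hpr : p ≤ r := by have := mem_range.1 hp; omega
  rw [PP_eq hpr, qb_eq hpr]
  have hx : ((t : RatFunc ℚ) ^ (f - r)) ^ p = t ^ ((f - r) * p) := by
    rw [← zpow_natCast (t ^ (f - (r:ℤ))) p, ← zpow_mul]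
  have hexp2 : (t : RatFunc ℚ) ^ (p.choose 2) * t ^ ((f - r) * p)
      = t ^ ((p.choose 2 : ℤ) - r * p) * t ^ (f * p) := by
    rw [← zpow_natCast t (p.choose 2), ← tzmul, ← tzmul]
    congr 1
    ring
  calc (-1 : RatFunc ℚ) ^ p * t ^ ((p.choose 2 : ℤ) - r * p) * al r / al (r - p) / al p * t ^ (f * p)
      = ((-1) ^ p * (al r / (al p * al (r - p)))) * (t ^ ((p.choose 2 : ℤ) - (r:ℤ) * p) * t ^ (f * p)) := by
        ring
    _ = ((-1) ^ p * (al r / (al p * al (r - p)))) * (t ^ (p.choose 2) * t ^ ((f - (r:ℤ)) * p)) := by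
        rw [hexp2]
    _ = (-1) ^ p * t ^ (p.choose 2) * (al r / (al p * al (r - p))) * (t ^ (f - (r:ℤ))) ^ p := by
        rw [hx]; ring
lemma vdm (e : ℕ) : ∀ n c, n ≤ c + e →
    ∑ m ∈ range (n + 1), (-1) ^ m * t ^ (m.choose 2) * qb n m * qb (c + e - m) e
      = t ^ (n * c) * qb (c + e - n) c := by
  intro n
  induction n with
  | zero =>
    intro c _
    rw [range_one, sum_singleton]
    simp only [pow_zero, Nat.choose_zero_right, Nat.sub_zero, Nat.mul_zero, Nat.zero_mul]
    rw [qb_zero, qb_symm (by omega : e ≤ c + e), show c + e - e = c by omega,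
      show (0:ℕ).choose 2 = 0 from Nat.choose_eq_zero_of_lt (by omega), pow_zero]
    ring
  | succ n ih =>
    intro c h
    rcases Nat.eq_zero_or_pos c with rfl | hc
    · -- c = 0
      rw [Finset.sum_eq_single_of_mem 0 (mem_range.2 (by omega)) (by
        intro m hm hm0
        rw [qb_of_gt (by omega : 0 + e - m < e)]
        ring)]
      rw [qb_zero, show (0:ℕ) + e - 0 = e by omega, qb_self]
      rw [show (0:ℕ) + e - (n+1) = e - (n+1) by omega, qb_zero]
      norm_num
    · obtain ⟨c', rfl⟩ : ∃ c', c = c' + 1 := ⟨c - 1, by omega⟩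
      have hn_le : n ≤ c' + 1 + e := by omega
      have hn_le' : n ≤ c' + e := by omega
      rw [Finset.sum_range_succ'
        (fun m => (-1 : RatFunc ℚ) ^ m * t ^ (m.choose 2) * qb (n+1) m * qb (c' + 1 + e - m) e) (n+1)]
      have hterm : ∀ m ∈ range (n + 1),
          (-1 : RatFunc ℚ) ^ (m+1) * t ^ ((m+1).choose 2) * qb (n+1) (m+1) * qb (c' + 1 + e - (m+1)) e
          = (-1) ^ (m+1) * t ^ ((m+1).choose 2) * qb n (m+1) * qb (c' + 1 + e - (m+1)) e
            + (-(t ^ n)) * ((-1) ^ m * t ^ (m.choose 2) * qb n m * qb (c' + e - m) e) := by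
        intro m hm
        have hmn : m ≤ n := by have := mem_range.1 hm; omega
        rw [qb_pascal2 (by omega : 1 ≤ n + 1) (by omega : 1 ≤ m + 1), Nat.add_sub_cancel,
          Nat.add_sub_cancel, show n + 1 - (m + 1) = n - m by omega]
        have hch : (m+1).choose 2 = m.choose 2 + m := by
          have h1 : (m+1).choose 2 = m.choose 1 + m.choose 2 := Nat.choose_succ_succ m 1
          rw [Nat.choose_one_right] at h1
          omega
        have hpow : (t : RatFunc ℚ) ^ ((m+1).choose 2) * t ^ (n - m)
            = t ^ (m.choose 2) * t ^ n := by
          rw [← pow_add, ← pow_add, hch]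
          congr 1
          omega
        have hidx : c' + 1 + e - (m + 1) = c' + e - m := by omega
        calc (-1 : RatFunc ℚ) ^ (m+1) * t ^ ((m+1).choose 2) *
              (qb n (m+1) + t ^ (n-m) * qb n m) * qb (c' + 1 + e - (m+1)) e
            = (-1) ^ (m+1) * t ^ ((m+1).choose 2) * qb n (m+1) * qb (c' + 1 + e - (m+1)) e
              + (-1) ^ (m+1) * (t ^ ((m+1).choose 2) * t ^ (n-m)) * qb n m * qb (c' + 1 + e - (m+1)) e := by
              ring
          _ = _ := by rw [hpow, hidx, pow_succ]; ring
      rw [Finset.sum_congr rfl hterm, Finset.sum_add_distrib, ← Finset.mul_sum, ih c' hn_le']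
      have hA : (∑ m ∈ range (n + 1),
            (-1 : RatFunc ℚ) ^ (m+1) * t ^ ((m+1).choose 2) * qb n (m+1) * qb (c' + 1 + e - (m+1)) e)
          + (-1 : RatFunc ℚ) ^ 0 * t ^ ((0:ℕ).choose 2) * qb (n+1) 0 * qb (c' + 1 + e - 0) e
          = t ^ (n * (c' + 1)) * qb (c' + 1 + e - n) (c' + 1) := by
        have hps := Finset.sum_range_succ'
          (fun m => (-1 : RatFunc ℚ) ^ m * t ^ (m.choose 2) * qb n m * qb (c' + 1 + e - m) e) (n+1)
        rw [Finset.sum_range_succ _ (n+1), qb_of_gt (by omega : n < n + 1), mul_zero,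
          zero_mul, add_zero] at hps
        rw [show qb (n+1) 0 = qb n 0 by rw [qb_zero, qb_zero]]
        rw [← hps, ih (c'+1) hn_le]
      rw [show ∀ A B C : RatFunc ℚ, A + B + C = (A + C) + B from fun _ _ _ => by ring, hA]
      have hpas : qb (c' + 1 + e - n) (c' + 1)
          = qb (c' + e - n) c' + t ^ (c'+1) * qb (c' + e - n) (c' + 1) := by
        rw [show c' + 1 + e - n = (c' + e - n) + 1 by omega, qb_pascal1 (by omega : 1 ≤ c' + 1),
          Nat.add_sub_cancel]
      rw [hpas, show c' + 1 + e - (n + 1) = c' + e - n by omega]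
      have he1 : (t : RatFunc ℚ) ^ (n * (c'+1)) * t ^ (c'+1) = t ^ ((n+1) * (c'+1)) := by
        rw [← pow_add]; congr 1; ring
      have he2 : (t : RatFunc ℚ) ^ n * t ^ (n * c') = t ^ (n * (c'+1)) := by
        rw [← pow_add]; congr 1; ring
      calc t ^ (n * (c'+1)) * (qb (c' + e - n) c' + t ^ (c'+1) * qb (c' + e - n) (c' + 1))
            + (-(t^n)) * (t ^ (n * c') * qb (c' + e - n) c')
          = (t ^ (n * (c'+1)) * t ^ (c'+1)) * qb (c' + e - n) (c' + 1)
            + (t ^ (n * (c'+1)) - t ^ n * t ^ (n * c')) * qb (c' + e - n) c' := by ring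
        _ = t ^ ((n+1) * (c'+1)) * qb (c' + e - n) (c' + 1) := by rw [he1, he2]; ring
lemma tz_ne_zero (z : ℤ) : (t : RatFunc ℚ) ^ z ≠ 0 := zpow_ne_zero z t_ne

lemma vdmP_term_core {c e n m : ℕ} (hmn : m ≤ n) (hmc : m ≤ c) :
    (PP c m * al (c - m)) * (PP n m * al (n - m)) *
        (t ^ ((m : ℤ) * (n - e)) * al (c + e) * al e * al (c + e - m))
      = (al c * al n * al e * al (c + e - m)) * ((-1)^m * (-1)^m) *
          (t ^ (m.choose 2) * t ^ ((m.choose 2 : ℤ) - (c + e : ℕ) * m)) * al (c + e) := by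
  have hT : (t : RatFunc ℚ) ^ ((m.choose 2 : ℤ) - c * m) * t ^ ((m.choose 2 : ℤ) - n * m)
        * t ^ ((m : ℤ) * (n - e))
      = t ^ (m.choose 2) * t ^ ((m.choose 2 : ℤ) - (c + e : ℕ) * m) := by
    rw [← zpow_natCast t (m.choose 2), ← tzmul, ← tzmul, ← tzmul]
    congr 1
    push_cast
    ring
  calc (PP c m * al (c - m)) * (PP n m * al (n - m)) *
        (t ^ ((m : ℤ) * (n - e)) * al (c + e) * al e * al (c + e - m))
      = ((-1)^m * t ^ ((m.choose 2 : ℤ) - c * m) * al c) *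
          ((-1)^m * t ^ ((m.choose 2 : ℤ) - n * m) * al n) *
          (t ^ ((m : ℤ) * (n - e)) * al (c + e) * al e * al (c + e - m)) := by
        rw [PP_eq' hmc, PP_eq' hmn]
    _ = (al c * al n * al e * al (c + e - m)) * ((-1)^m * (-1)^m) *
          (t ^ ((m.choose 2 : ℤ) - c * m) * t ^ ((m.choose 2 : ℤ) - n * m)
            * t ^ ((m : ℤ) * (n - e))) * al (c + e) := by ring
    _ = _ := by rw [hT]

lemma vdmP_term {c e n m : ℕ} (hmn : m ≤ n) (h : n ≤ c + e) :
    PP c m * PP n m / (al m * PP (c + e) m) * t ^ ((m : ℤ) * (n - e))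
      = (al c * al e / al (c + e)) *
        ((-1) ^ m * t ^ (m.choose 2) * qb n m * qb (c + e - m) e) := by
  rcases le_or_gt m c with hmc | hmc
  · have hmN : m ≤ c + e := by omega
    have heN : e ≤ c + e - m := by omega
    have core := vdmP_term_core (e := e) hmn hmc
    rw [qb_eq hmn, qb_eq heN, show c + e - m - e = c - m by omega]
    rw [div_mul_eq_mul_div, div_eq_iff (mul_ne_zero (al_ne m) (PP_ne hmN))]
    have hPN := PP_eq' hmN
    have h1 := al_ne m
    have h2 := al_ne (c + e)
    have h3 := al_ne (c - m)
    have h4 := al_ne (n - m)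
    have h5 := al_ne (c + e - m)
    have h6 := al_ne e
    field_simp
    refine mul_right_cancel₀ (al_ne (c + e - m)) ?_
    refine mul_right_cancel₀ (al_ne e) ?_
    linear_combination core
      - (al c * al e * ((-1:RatFunc ℚ))^m * t ^ (m.choose 2) * al n * al (c + e - m)) * hPN
  · rw [PP_zero_of_lt hmc, qb_of_gt (by omega : c + e - m < e)]
    ring

lemma vdmP {c e n : ℕ} (h : n ≤ c + e) :
    PP e n / PP (c + e) n
      = ∑ m ∈ range (n + 1),
          PP c m * PP n m / (al m * PP (c + e) m) * t ^ ((m : ℤ) * (n - e)) := by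
  have hsum : ∑ m ∈ range (n + 1),
      PP c m * PP n m / (al m * PP (c + e) m) * t ^ ((m : ℤ) * (n - e))
      = (al c * al e / al (c + e)) * (t ^ (n * c) * qb (c + e - n) c) := by
    rw [← vdm e n c h, Finset.mul_sum]
    apply Finset.sum_congr rfl
    intro m hm
    exact vdmP_term (by have := mem_range.1 hm; omega) h
  rw [hsum]
  rcases le_or_gt n e with hne | hne
  · have hcN : c ≤ c + e - n := by omega
    rw [qb_eq hcN, show c + e - n - c = e - n by omega]
    rw [div_eq_iff (PP_ne h)]
    have E1 := PP_eq' hne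
    have E2 := PP_eq' h
    have hT : (t : RatFunc ℚ) ^ ((n * c : ℕ)) * t ^ ((n.choose 2 : ℤ) - (c + e : ℕ) * n)
        = t ^ ((n.choose 2 : ℤ) - e * n) := by
      rw [← zpow_natCast t (n * c), ← tzmul]
      congr 1
      push_cast
      ring
    have h1 := al_ne (c + e)
    have h2 := al_ne c
    have h3 := al_ne (e - n)
    have h4 := al_ne (c + e - n)
    field_simp
    linear_combination (al (c + e)) * E1 - (al e * t ^ (n * c)) * E2
      - (al e * al (c + e) * ((-1 : RatFunc ℚ)) ^ n) * hT
  · rw [PP_zero_of_lt hne, qb_of_gt (by omega : c + e - n < c), zero_div]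
    ring
lemma gterm {a b N m : ℕ} (f : ℤ) (hm : m ≤ b) (hmN : m ≤ N) (p : ℕ) :
    PP b (m+p) / al (m+p) * t ^ (f * (m+p : ℕ)) *
        (PP (N-a) m * PP (m+p) m / (al m * PP N m) * t ^ ((m:ℤ) * ((m+p : ℕ) - a)))
      = ((-1)^m * t ^ ((m.choose 2 : ℤ) + m * (f-a)) * (PP (N-a) m * PP b m / (al m * PP N m)))
        * (PP (b-m) p / al p * t ^ (f * p)) := by
  have hsplit : PP b (m+p) = PP b m * PP (b-m) p := by
    unfold PP
    rw [poch_add]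
    congr 2
    rw [← zpow_natCast t m, ← tzmul]
    congr 1
    push_cast [Nat.cast_sub hm]
    ring
  have hPmp : PP (m+p) m * al p = (-1)^m * t ^ ((m.choose 2 : ℤ) - (m+p : ℕ) * m) * al (m+p) := by
    have h0 := PP_eq' (show m ≤ m + p by omega)
    rwa [show m + p - m = p by omega] at h0
  have hE : (t : RatFunc ℚ) ^ (f * (m+p : ℕ)) * t ^ ((m.choose 2 : ℤ) - (m+p : ℕ) * m)
        * t ^ ((m:ℤ) * ((m+p : ℕ) - a))
      = t ^ ((m.choose 2 : ℤ) + m * (f-a)) * t ^ (f * p) := by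
    rw [← tzmul, ← tzmul, ← tzmul]
    congr 1
    push_cast
    ring
  have h1 := al_ne (m + p)
  have h2 := al_ne p
  have h3 := al_ne m
  have h4 := PP_ne hmN
  rw [hsplit]
  push_cast at hPmp hE
  field_simp
  push_cast
  linear_combination
    (PP b m * PP (b-m) p * t ^ (f * ((m:ℤ)+p)) * PP (N-a) m * t ^ ((m:ℤ)*((m:ℤ)+p-a))) * hPmp
    + (((-1 : RatFunc ℚ))^m * al (m+p) * PP b m * PP (b-m) p * PP (N-a) m) * hE

lemma transform {a b N : ℕ} (f : ℤ) (ha : a ≤ N) (hb : b ≤ N) :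
    ∑ n ∈ range (N + 1), PP a n * PP b n / (al n * PP N n) * t ^ (f * n)
      = ∑ m ∈ range (N + 1),
          (-1) ^ m * t ^ ((m.choose 2 : ℤ) + m * (f - a)) *
            (PP (N - a) m * PP b m / (al m * PP N m)) * poch (t ^ (f + m - b)) (b - m) := by
  have step1 : ∑ n ∈ range (N + 1), PP a n * PP b n / (al n * PP N n) * t ^ (f * n)
      = ∑ n ∈ range (N + 1), ∑ m ∈ range (n + 1),
          PP b n / al n * t ^ (f * n) *
            (PP (N - a) m * PP n m / (al m * PP N m) * t ^ ((m : ℤ) * ((n : ℤ) - a))) := by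
    apply Finset.sum_congr rfl
    intro n hn
    have hv := vdmP (c := N - a) (e := a) (n := n) (by
      have := mem_range.1 hn; omega)
    rw [show N - a + a = N by omega] at hv
    calc PP a n * PP b n / (al n * PP N n) * t ^ (f * n)
        = PP b n / al n * t ^ (f * n) * (PP a n / PP N n) := by ring
      _ = _ := by rw [hv, Finset.mul_sum]
  rw [step1]
  have step2 : ∑ n ∈ range (N + 1), ∑ m ∈ range (n + 1),
        PP b n / al n * t ^ (f * n) *
          (PP (N - a) m * PP n m / (al m * PP N m) * t ^ ((m : ℤ) * ((n : ℤ) - a)))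
      = ∑ m ∈ range (N + 1), ∑ p ∈ range (N + 1 - m),
          PP b (m+p) / al (m+p) * t ^ (f * (m+p : ℕ)) *
            (PP (N - a) m * PP (m+p) m / (al m * PP N m) * t ^ ((m : ℤ) * (((m+p : ℕ) : ℤ) - a))) := by
    have flip := Finset.sum_range_diag_flip (N + 1)
      (fun x y => PP b (x+y) / al (x+y) * t ^ (f * (x+y : ℕ)) *
        (PP (N - a) x * PP (x+y) x / (al x * PP N x) * t ^ ((x : ℤ) * (((x+y : ℕ) : ℤ) - a))))
    rw [← flip]
    apply Finset.sum_congr rfl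
    intro n hn
    apply Finset.sum_congr rfl
    intro k hk
    have hkn : k ≤ n := by have := mem_range.1 hk; omega
    rw [show k + (n - k) = n by omega]
  rw [step2]
  apply Finset.sum_congr rfl
  intro m hm
  have hmN : m ≤ N := by have := mem_range.1 hm; omega
  rcases le_or_gt m b with hmb | hmb
  · -- m ≤ b
    have hrange : N + 1 - m = (N - m) + 1 := by omega
    rw [hrange]
    rw [Finset.sum_congr rfl (fun p _ => gterm f hmb hmN p), ← Finset.mul_sum]
    rw [gauss' (show b - m ≤ N - m by omega) f]
    rw [show f - ((b - m : ℕ) : ℤ) = f + m - b by push_cast [Nat.cast_sub hmb]; ring]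
  · -- b < m : both sides vanish
    rw [Finset.sum_eq_zero (fun p _ => by
      rw [PP_zero_of_lt (show b < m + p by omega), zero_div, zero_mul, zero_mul])]
    rw [PP_zero_of_lt hmb]
    rw [mul_zero, zero_div, mul_zero, zero_mul]
lemma match_lemma {a b i2 j2 : ℕ} {d : ℤ} (hd1 : d + a = i2 + 1) (hd2 : d + b = j2 + 1) :
    al j2 * poch (t ^ d) a = al i2 * poch (t ^ d) b := by
  rcases le_or_gt 1 d with hd | hd
  · obtain ⟨k, rfl⟩ : ∃ k : ℕ, d = (k : ℤ) + 1 := ⟨(d - 1).toNat, by omega⟩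
    have hi2 : i2 = k + a := by omega
    have hj2 : j2 = k + b := by omega
    subst hi2 hj2
    rw [al_add_poch k a, al_add_poch k b]
    ring
  · have hz : ∀ c : ℕ, d + c ≥ 1 → poch (t ^ d) c = 0 := by
      intro c hc
      unfold poch
      apply prod_eq_zero (i := (-d).toNat) (mem_range.2 (by omega))
      rw [← zpow_natCast t (-d).toNat, ← tzmul, show d + ((-d).toNat : ℤ) = 0 by omega]
      simp
    rw [hz a (by omega), hz b (by omega)]
    ring

lemma u_eq (j i j' i' j'' i'' : ℕ) :
    u j i j' i' j'' i'' =
      al (i + j) / (al i * al i' * al i'' * al j * al j'') *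
        ∑ n ∈ range (i + j + 1),
          PP i n * PP i' n / (al n * PP (i + j) n) * t ^ (((i'' : ℤ) + 1) * n) := by
  unfold u
  congr 1
  have hterm : ∀ n ∈ range (min i i' + 1),
      poch (t ^ (-(i : ℤ))) n * poch (t ^ (-(i' : ℤ))) n /
          (poch t n * poch (t ^ (-((i : ℤ) + (j : ℤ)))) n) * t ^ (n * (i'' + 1))
      = PP i n * PP i' n / (al n * PP (i + j) n) * t ^ (((i'' : ℤ) + 1) * n) := by
    intro n _
    rw [poch_t_eq_al]
    have h1 : poch (t ^ (-((i : ℤ) + (j : ℤ)))) n = PP (i + j) n := by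
      unfold PP
      congr 2
    have h2 : (t : RatFunc ℚ) ^ (n * (i'' + 1)) = t ^ (((i'' : ℤ) + 1) * n) := by
      rw [← zpow_natCast t (n * (i'' + 1))]
      congr 1
      push_cast
      ring
    rw [h1, h2]
    rfl
  rw [Finset.sum_congr rfl hterm]
  apply Finset.sum_subset (Finset.range_subset_range.2 (by omega))
  intro n _ hn
  have hn' : min i i' < n := by simp at hn; omega
  rcases Nat.lt_or_ge i n with hin | hin
  · rw [PP_zero_of_lt hin, zero_mul, zero_div, zero_mul]
  · rw [PP_zero_of_lt (show i' < n by omega), mul_zero, zero_div, zero_mul]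

/-- `u` is invariant under the Heine transformation
`(j,i,j',i',j'',i'') ↦ (i',j'',i'',j,i,j')`. -/
theorem u_heine (j i j' i' j'' i'' : ℕ)
    (h1 : (i' : ℤ) - j = (i'' : ℤ) - j') (h2 : (i'' : ℤ) - j' = (i : ℤ) - j'') :
    u j i j' i' j'' i'' = u i' j'' i'' j i j' := by
  have hN : j'' + i' = i + j := by omega
  rw [u_eq j i j' i' j'' i'', u_eq i' j'' i'' j i j', hN]
  set N := i + j with hNdef
  have hiN : i ≤ N := by omega
  have hi'N : i' ≤ N := by omega
  have hjN : j ≤ N := by omega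
  have hj''N : j'' ≤ N := by omega
  have key : al j' * ∑ n ∈ range (N + 1),
        PP i n * PP i' n / (al n * PP N n) * t ^ (((i'' : ℤ) + 1) * n)
      = al i'' * ∑ n ∈ range (N + 1),
        PP j'' n * PP j n / (al n * PP N n) * t ^ (((j' : ℤ) + 1) * n) := by
    rw [transform ((i'' : ℤ) + 1) hiN hi'N, transform ((j' : ℤ) + 1) hj''N hjN,
      show N - i = j by omega, show N - j'' = i' by omega]
    rw [Finset.mul_sum, Finset.mul_sum]
    apply Finset.sum_congr rfl
    intro m hm
    have hmN : m ≤ N := by have := mem_range.1 hm; omega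
    have hexp : ((i'' : ℤ) + 1) - i = ((j' : ℤ) + 1) - j'' := by omega
    have hbase : ((i'' : ℤ) + 1) + m - i' = ((j' : ℤ) + 1) + m - j := by omega
    rw [hexp, hbase]
    rcases le_or_gt m i' with hmi' | hmi'
    · rcases le_or_gt m j with hmj | hmj
      · have hml := match_lemma (a := i' - m) (b := j - m) (i2 := i'') (j2 := j')
          (d := ((j' : ℤ) + 1) + m - j)
          (by push_cast [Nat.cast_sub hmi']; omega)
          (by push_cast [Nat.cast_sub hmj]; omega)
        linear_combination ((-1 : RatFunc ℚ)) ^ m * t ^ ((m.choose 2 : ℤ) + m * (((j' : ℤ) + 1) - j''))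
          * (PP i' m * PP j m / (al m * PP N m)) * hml
      · rw [PP_zero_of_lt hmj]
        ring
    · rw [PP_zero_of_lt hmi']
      ring
  have d1 : al i * al i' * al i'' * al j * al j'' ≠ 0 := by
    exact mul_ne_zero (mul_ne_zero (mul_ne_zero (mul_ne_zero (al_ne i) (al_ne i')) (al_ne i'')) (al_ne j)) (al_ne j'')
  have d2 : al j'' * al j * al j' * al i' * al i ≠ 0 := by
    exact mul_ne_zero (mul_ne_zero (mul_ne_zero (mul_ne_zero (al_ne j'') (al_ne j)) (al_ne j')) (al_ne i')) (al_ne i)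
  rw [div_mul_eq_mul_div, div_mul_eq_mul_div, div_eq_div_iff d1 d2]
  linear_combination (al N * al i * al i' * al j * al j'') * key
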